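/- arXiv:2504.12683 — 3 statements merged into one kernel-verified Lean document; each statement's English description precedes it below -/
import Mathlib

section
/- The variance-gamma density arises as a Gamma mixture of normals: for Σ positive definite, ψ > 0, μ, α ∈ ℝ^d with α ≠ 0 and v ≠ μ, ∫₀^∞ φ(v; μ + wα, wΣ) · (ψ^ψ/Γ(ψ)) w^{ψ-1} e^{-ψw} dw = [2 ψ^ψ exp((v−μ)ᵀΣ^{-1}α) / ((2π)^{d/2}|Σ|^{1/2}Γ(ψ))] · (δ/(ρ+2ψ))^{(ψ−d/2)/2} · K_{ψ−d/2}(√((ρ+2ψ)δ)), where δ = (v−μ)ᵀΣ^{-1}(v−μ) and ρ = αᵀΣ^{-1}α. -/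
open MeasureTheory Real Matrix

/-- The modified Bessel function of the third kind, defined by its integral representation. -/
noncomputable def besselK (l u : ℝ) : ℝ :=
  (1/2) * ∫ w in Set.Ioi (0:ℝ), w ^ (l - 1) * Real.exp (-(u/2) * (w + 1/w))

/-- Density of the `d`-variate normal distribution `N(m, C)`. -/
noncomputable def mvnPdf (d : ℕ) (m : Fin d → ℝ) (C : Matrix (Fin d) (Fin d) ℝ)
    (x : Fin d → ℝ) : ℝ :=
  (2 * Real.pi) ^ (-(d:ℝ)/2) * C.det ^ (-(1:ℝ)/2) *
    Real.exp (-(1/2) * ((x - m) ⬝ᵥ (C⁻¹ *ᵥ (x - m))))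

lemma quad_expand {d : ℕ} (T : Matrix (Fin d) (Fin d) ℝ) (hT : Tᵀ = T)
    (y α : Fin d → ℝ) (w : ℝ) :
    (y - w • α) ⬝ᵥ (T *ᵥ (y - w • α)) =
      y ⬝ᵥ (T *ᵥ y) - 2*w*(y ⬝ᵥ (T *ᵥ α)) + w^2*(α ⬝ᵥ (T *ᵥ α)) := by
  have hsymm : α ⬝ᵥ (T *ᵥ y) = y ⬝ᵥ (T *ᵥ α) := by
    rw [dotProduct_mulVec, ← mulVec_transpose, hT, dotProduct_comm]
  simp only [sub_dotProduct, dotProduct_sub, mulVec_sub, mulVec_smul, smul_dotProduct,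
    dotProduct_smul, smul_eq_mul, hsymm]
  ring

/-- The variance-gamma density arises as a Gamma mixture of normals. -/
theorem vg_density_mixture {d : ℕ} (μ α v : Fin d → ℝ) (S : Matrix (Fin d) (Fin d) ℝ)
    (hS : S.PosDef) (ψ : ℝ) (hψ : 0 < ψ) (hα : α ≠ 0) (hv : v ≠ μ)
    (ρ δ : ℝ) (hρ : ρ = α ⬝ᵥ (S⁻¹ *ᵥ α)) (hδ : δ = (v - μ) ⬝ᵥ (S⁻¹ *ᵥ (v - μ))) :
    ∫ w in Set.Ioi (0:ℝ),
        mvnPdf d (μ + w • α) (w • S) v *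
          (ψ ^ ψ / Real.Gamma ψ) * w ^ (ψ - 1) * Real.exp (-ψ * w) =
      2 * ψ ^ ψ * Real.exp ((v - μ) ⬝ᵥ (S⁻¹ *ᵥ α)) /
          ((2 * Real.pi) ^ ((d:ℝ)/2) * Real.sqrt S.det * Real.Gamma ψ) *
        (δ / (ρ + 2*ψ)) ^ ((ψ - (d:ℝ)/2) / 2) *
        besselK (ψ - (d:ℝ)/2) (Real.sqrt ((ρ + 2*ψ) * δ)) := by
  classical
  have hTpd : S⁻¹.PosDef := hS.inv
  have hTsymm : (S⁻¹)ᵀ = S⁻¹ := by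
    have := hTpd.isHermitian.eq
    rwa [conjTranspose_eq_transpose_of_trivial] at this
  have hdet : (0:ℝ) < S.det := hS.det_pos
  set y : Fin d → ℝ := v - μ with hy
  set β : ℝ := y ⬝ᵥ (S⁻¹ *ᵥ α) with hβ
  have hρpos : 0 < ρ := by
    rw [hρ]; simpa using hTpd.dotProduct_mulVec_pos hα
  have hδpos : 0 < δ := by
    rw [hδ]
    have hyne : y ≠ 0 := sub_ne_zero.mpr hv
    simpa using hTpd.dotProduct_mulVec_pos hyne
  set a : ℝ := ρ + 2*ψ with ha_def
  have ha : 0 < a := by positivity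
  set lam : ℝ := ψ - (d:ℝ)/2 with hlam
  set u : ℝ := Real.sqrt (a * δ) with hu
  set c : ℝ := Real.sqrt (δ / a) with hc_def
  have hc : 0 < c := Real.sqrt_pos.mpr (by positivity)
  have huca : u * c⁻¹ = a := by
    rw [hu, hc_def, ← Real.sqrt_inv, ← Real.sqrt_mul (by positivity)]
    rw [show a * δ * (δ / a)⁻¹ = a^2 by field_simp]
    exact Real.sqrt_sq ha.le
  have hucd : u * c = δ := by
    rw [hu, hc_def, ← Real.sqrt_mul (by positivity)]
    rw [show a * δ * (δ / a) = δ^2 by field_simp]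
    exact Real.sqrt_sq hδpos.le
  set G : ℝ := ψ ^ ψ / Real.Gamma ψ with hG
  set A : ℝ := (2 * Real.pi) ^ (-(d:ℝ)/2) with hA
  set D : ℝ := S.det ^ (-(1:ℝ)/2) with hD
  set K : ℝ := A * D * Real.exp β * G * c ^ (lam - 1) with hK
  set g : ℝ → ℝ := fun t => t ^ (lam - 1) * Real.exp (-(u/2) * (t + 1/t)) with hg
  have key : ∀ w ∈ Set.Ioi (0:ℝ),
      mvnPdf d (μ + w • α) (w • S) v * (ψ ^ ψ / Real.Gamma ψ) * w ^ (ψ - 1) *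
        Real.exp (-ψ * w) = K * g (c⁻¹ * w) := by
    intro w hw
    rw [Set.mem_Ioi] at hw
    haveI := invertibleOfNonzero hw.ne'
    have hinv : (w • S)⁻¹ = w⁻¹ • S⁻¹ := by
      rw [Matrix.inv_smul (A := S) w (isUnit_iff_ne_zero.mpr hdet.ne'), invOf_eq_inv]
    have hmsub : v - (μ + w • α) = y - w • α := by rw [hy, sub_add_eq_sub_sub]
    have hquad : (y - w • α) ⬝ᵥ ((w • S)⁻¹ *ᵥ (y - w • α)) = w⁻¹ * (δ - 2*w*β + w^2*ρ) := by
      rw [hinv, smul_mulVec, dotProduct_smul, smul_eq_mul,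
        quad_expand S⁻¹ hTsymm, ← hδ, ← hρ]
    have hdetw : (w • S).det = w^d * S.det := by rw [det_smul, Fintype.card_fin]
    have hpow : ((w^d : ℝ) * S.det) ^ (-(1:ℝ)/2) = w ^ (-(d:ℝ)/2) * D := by
      rw [Real.mul_rpow (by positivity) hdet.le, ← Real.rpow_natCast w d,
        ← Real.rpow_mul hw.le, show (d:ℝ) * (-1 / 2) = -(d:ℝ)/2 by ring, hD]
    rw [mvnPdf, hmsub, hquad, hdetw, hpow]
    have hwpow : w ^ (-(d:ℝ)/2) * w ^ (ψ-1) = w ^ (lam-1) := by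
      rw [← Real.rpow_add hw]; congr 1; rw [hlam]; ring
    have hcpow : (c⁻¹*w) ^ (lam-1) = c⁻¹ ^ (lam-1) * w ^ (lam-1) :=
      Real.mul_rpow (inv_pos.mpr hc).le hw.le
    have hccancel : c ^ (lam-1) * c⁻¹ ^ (lam-1) = 1 := by
      rw [← Real.mul_rpow hc.le (inv_pos.mpr hc).le, mul_inv_cancel₀ hc.ne', Real.one_rpow]
    have hexp : Real.exp (-(1/2) * (w⁻¹*(δ - 2*w*β + w^2*ρ))) * Real.exp (-ψ*w)
        = Real.exp β * Real.exp (-(u/2) * ((c⁻¹*w) + 1/(c⁻¹*w))) := by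
      rw [← Real.exp_add, ← Real.exp_add]
      congr 1
      have h1 : 1/(c⁻¹*w) = c * w⁻¹ := by field_simp
      have hu' : u = a * c := by
        rw [← huca]; field_simp
      have hδ' : δ = a * c^2 := by rw [← hucd, hu']; ring
      rw [h1, hu', hδ', ha_def]
      field_simp
      ring
    calc ((2*Real.pi) ^ (-(d:ℝ)/2) * (w ^ (-(d:ℝ)/2) * D) *
            Real.exp (-(1/2) * (w⁻¹*(δ - 2*w*β + w^2*ρ)))) * (ψ ^ ψ / Real.Gamma ψ) *
            w ^ (ψ-1) * Real.exp (-ψ*w)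
        = A * D * G * (w ^ (-(d:ℝ)/2) * w ^ (ψ-1)) *
            (Real.exp (-(1/2) * (w⁻¹*(δ - 2*w*β + w^2*ρ))) * Real.exp (-ψ*w)) := by
          rw [hA, hG]; ring
      _ = A * D * G * w ^ (lam-1) *
            (Real.exp β * Real.exp (-(u/2) * ((c⁻¹*w) + 1/(c⁻¹*w)))) := by
          rw [hwpow, hexp]
      _ = K * g (c⁻¹ * w) := by
          rw [hK, hg]
          simp only []
          rw [hcpow]
          linear_combination (-(A * D * Real.exp β * G * w ^ (lam-1) *
            Real.exp (-(u/2) * ((c⁻¹*w) + 1/(c⁻¹*w))))) * hccancel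
  rw [setIntegral_congr_fun measurableSet_Ioi key, integral_const_mul,
    integral_comp_mul_left_Ioi g 0 (inv_pos.mpr hc)]
  rw [inv_inv, mul_zero, smul_eq_mul]
  have hbes : ∫ x in Set.Ioi (0:ℝ), g x = 2 * besselK lam u := by
    rw [besselK, hg]; ring
  rw [hbes]
  have hGamma : 0 < Real.Gamma ψ := Real.Gamma_pos_of_pos hψ
  have hA' : A = ((2*Real.pi) ^ ((d:ℝ)/2))⁻¹ := by
    rw [hA, ← Real.rpow_neg (by positivity), neg_div]
  have hD' : D = (Real.sqrt S.det)⁻¹ := by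
    rw [hD, Real.sqrt_eq_rpow, ← Real.rpow_neg hdet.le]
    norm_num
  have hclam : c ^ (lam-1) * c = (δ/a) ^ (lam/2) := by
    rw [hc_def, Real.sqrt_eq_rpow, ← Real.rpow_mul (by positivity),
      ← Real.rpow_add (by positivity)]
    congr 1
    ring
  calc K * (c * (2 * besselK lam u))
      = A * D * Real.exp β * G * (c ^ (lam-1) * c) * (2 * besselK lam u) := by
        rw [hK]; ring
    _ = 2 * ψ ^ ψ * Real.exp β / ((2 * Real.pi) ^ ((d:ℝ)/2) * Real.sqrt S.det *
          Real.Gamma ψ) * (δ/a) ^ (lam/2) * besselK lam u := by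
        rw [hclam, hA', hD', hG]
        have h1 : (0:ℝ) < (2*Real.pi) ^ ((d:ℝ)/2) := by positivity
        have h2 : (0:ℝ) < Real.sqrt S.det := Real.sqrt_pos.mpr hdet
        field_simp
end

section
/- The normal-inverse Gaussian density arises as an inverse-Gaussian mixture of normals: for Σ positive definite, κ > 0, μ, α ∈ ℝ^d, and v ∈ ℝ^d, ∫₀^∞ φ(v; μ + wα, wΣ) · (1/√(2π)) e^{κ} w^{-3/2} exp(-(1/w + κ²w)/2) dw = [2 exp((v−μ)ᵀΣ^{-1}α + κ)/((2π)^{(d+1)/2}|Σ|^{1/2})] · ((δ+1)/(ρ+κ²))^{-(1+d)/4} · K_{-(1+d)/2}(√((ρ+κ²)(δ+1))), where δ = (v−μ)ᵀΣ^{-1}(v−μ) and ρ = αᵀΣ^{-1}α. -/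
open MeasureTheory Real Matrix

lemma integral_besselK_form (l a b : ℝ) (ha : 0 < a) (hb : 0 < b) :
    ∫ w in Set.Ioi (0:ℝ), w ^ (l - 1) * Real.exp (-((a / w + b * w) / 2))
      = 2 * (a / b) ^ (l / 2) * besselK l (Real.sqrt (a * b)) := by
  have hab : 0 < a / b := div_pos ha hb
  set s : ℝ := Real.sqrt (a / b) with hs
  have hs0 : 0 < s := Real.sqrt_pos.mpr hab
  set u : ℝ := Real.sqrt (a * b) with huu
  have hsu : s * u = a := by
    rw [hs, huu, ← Real.sqrt_mul hab.le]
    rw [show a / b * (a * b) = a ^ 2 by field_simp]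
    exact Real.sqrt_sq ha.le
  have hbs : b * s = u := by
    rw [hs, huu]
    rw [show b = Real.sqrt (b ^ 2) by rw [Real.sqrt_sq hb.le]]
    rw [← Real.sqrt_mul (by positivity)]
    congr 1
    rw [Real.sqrt_sq hb.le]
    field_simp
  have hcomp := MeasureTheory.integral_comp_mul_left_Ioi
    (fun w => w ^ (l - 1) * Real.exp (-((a / w + b * w) / 2))) 0 hs0
  simp only [mul_zero, smul_eq_mul] at hcomp
  have hmain : ∫ x in Set.Ioi (0:ℝ),
      (s * x) ^ (l - 1) * Real.exp (-((a / (s * x) + b * (s * x)) / 2))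
      = s ^ (l - 1) * ∫ x in Set.Ioi (0:ℝ), x ^ (l - 1) * Real.exp (-(u/2) * (x + 1/x)) := by
    rw [← MeasureTheory.integral_const_mul]
    apply MeasureTheory.setIntegral_congr_fun measurableSet_Ioi
    intro x hx
    have hx0 : (0:ℝ) < x := hx
    have hpow : (s * x) ^ (l - 1) = s ^ (l - 1) * x ^ (l - 1) :=
      Real.mul_rpow hs0.le hx0.le
    have hexp : a / (s * x) + b * (s * x) = u / x + u * x := by
      rw [← hsu, show b * (s * x) = u * x by rw [← hbs]; ring,
        mul_div_mul_left u x hs0.ne']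
    dsimp only
    rw [hpow, hexp]
    ring_nf
  rw [hcomp] at hmain
  have hint : ∫ x in Set.Ioi (0:ℝ), x ^ (l - 1) * Real.exp (-(u/2) * (x + 1/x))
      = 2 * besselK l u := by
    rw [besselK]; ring
  have hsl : s * s ^ (l - 1) = (a / b) ^ (l / 2) := by
    rw [show s * s ^ (l - 1) = s ^ (1:ℝ) * s ^ (l - 1) by rw [Real.rpow_one],
      ← Real.rpow_add hs0, show (1:ℝ) + (l - 1) = l by ring]
    rw [hs, Real.sqrt_eq_rpow, ← Real.rpow_mul hab.le,
      show (1:ℝ)/2 * l = l / 2 by ring]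
  calc ∫ w in Set.Ioi (0:ℝ), w ^ (l - 1) * Real.exp (-((a / w + b * w) / 2))
      = s * (s ^ (l - 1) * (2 * besselK l u)) := by
        rw [← hint, ← hmain, ← mul_assoc, mul_inv_cancel₀ hs0.ne', one_mul]
    _ = (s * s ^ (l - 1)) * (2 * besselK l u) := by ring
    _ = 2 * (a / b) ^ (l / 2) * besselK l u := by rw [hsl]; ring

/-- The normal-inverse Gaussian density arises as an inverse-Gaussian mixture of normals. -/
theorem nig_density_mixture {d : ℕ} (μ α v : Fin d → ℝ) (S : Matrix (Fin d) (Fin d) ℝ)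
    (hS : S.PosDef) (κ : ℝ) (hκ : 0 < κ)
    (ρ δ : ℝ) (hρ : ρ = α ⬝ᵥ (S⁻¹ *ᵥ α)) (hδ : δ = (v - μ) ⬝ᵥ (S⁻¹ *ᵥ (v - μ))) :
    ∫ w in Set.Ioi (0:ℝ),
        mvnPdf d (μ + w • α) (w • S) v *
          ((1 / Real.sqrt (2 * Real.pi)) * Real.exp κ * w ^ (-(3:ℝ)/2) *
            Real.exp (-(1/w + κ^2 * w) / 2)) =
      2 * Real.exp ((v - μ) ⬝ᵥ (S⁻¹ *ᵥ α) + κ) /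
          ((2 * Real.pi) ^ (((d:ℝ) + 1)/2) * Real.sqrt S.det) *
        ((δ + 1) / (ρ + κ^2)) ^ (-(1 + (d:ℝ))/4) *
        besselK (-(1 + (d:ℝ))/2) (Real.sqrt ((ρ + κ^2) * (δ + 1))) := by
  have hdet : 0 < S.det := hS.det_pos
  have hIsUnit : IsUnit S.det := hdet.ne'.isUnit
  have hSinv : (S⁻¹).PosDef := hS.inv
  have hsymm : (S⁻¹)ᵀ = S⁻¹ := by
    have h := hSinv.isHermitian
    rwa [Matrix.IsHermitian, Matrix.conjTranspose_eq_transpose_of_trivial] at h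
  set γ : ℝ := (v - μ) ⬝ᵥ (S⁻¹ *ᵥ α) with hγ
  have hρ0 : 0 ≤ ρ := by
    rw [hρ]
    simpa using hSinv.posSemidef.dotProduct_mulVec_nonneg α
  have hδ0 : 0 ≤ δ := by
    rw [hδ]
    simpa using hSinv.posSemidef.dotProduct_mulVec_nonneg (v - μ)
  have ha : (0:ℝ) < δ + 1 := by linarith
  have hb : (0:ℝ) < ρ + κ^2 := by positivity
  have hdot : α ⬝ᵥ (S⁻¹ *ᵥ (v - μ)) = γ := by
    rw [Matrix.dotProduct_mulVec, ← hsymm, Matrix.vecMul_transpose, dotProduct_comm, hγ]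
  set l : ℝ := -(1 + (d:ℝ))/2 with hl
  have key : Set.EqOn
      (fun w => mvnPdf d (μ + w • α) (w • S) v *
          ((1 / Real.sqrt (2 * Real.pi)) * Real.exp κ * w ^ (-(3:ℝ)/2) *
            Real.exp (-(1/w + κ^2 * w) / 2)))
      (fun w => ((2 * Real.pi) ^ (-((d:ℝ)+1)/2) * S.det ^ (-(1:ℝ)/2) * Real.exp (γ + κ)) *
          (w ^ (l - 1) * Real.exp (-(((δ+1) / w + (ρ+κ^2) * w) / 2))))
      (Set.Ioi (0:ℝ)) := by
    intro w hw
    have hw0 : (0:ℝ) < w := hw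
    have hdet2 : (w • S).det = w ^ d * S.det := by
      rw [Matrix.det_smul]; simp
    have hinv : (w • S)⁻¹ = w⁻¹ • S⁻¹ := by
      apply Matrix.inv_eq_right_inv
      rw [Matrix.smul_mul, Matrix.mul_smul, smul_smul, mul_inv_cancel₀ hw0.ne',
        one_smul, Matrix.mul_nonsing_inv _ hIsUnit]
    have hquad : (v - (μ + w • α)) ⬝ᵥ ((w⁻¹ • S⁻¹) *ᵥ (v - (μ + w • α)))
        = w⁻¹ * (δ - 2 * w * γ + w^2 * ρ) := by
      have hx : v - (μ + w • α) = (v - μ) - w • α := by abel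
      rw [hx, Matrix.smul_mulVec, dotProduct_smul, smul_eq_mul]
      congr 1
      rw [Matrix.mulVec_sub, Matrix.mulVec_smul, sub_dotProduct,
        dotProduct_sub, dotProduct_sub, smul_dotProduct,
        dotProduct_smul, dotProduct_smul, smul_dotProduct]
      simp only [smul_eq_mul]
      rw [hdot, ← hδ, ← hρ, ← hγ]
      ring
    have e1 : ((w:ℝ) ^ d * S.det) ^ (-(1:ℝ)/2)
        = w ^ ((d:ℝ) * (-(1:ℝ)/2)) * S.det ^ (-(1:ℝ)/2) := by
      rw [Real.mul_rpow (by positivity) hdet.le]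
      congr 1
      rw [← Real.rpow_natCast w d, ← Real.rpow_mul hw0.le]
    have e2 : (1:ℝ) / Real.sqrt (2 * Real.pi) = (2 * Real.pi) ^ (-(1:ℝ)/2) := by
      rw [Real.sqrt_eq_rpow, one_div, ← Real.rpow_neg (by positivity)]
      norm_num
    have e3 : (2 * Real.pi) ^ (-(d:ℝ)/2) * (2 * Real.pi) ^ (-(1:ℝ)/2)
        = (2 * Real.pi) ^ (-((d:ℝ)+1)/2) := by
      rw [← Real.rpow_add (by positivity)]
      congr 1
      ring
    have e4 : w ^ ((d:ℝ) * (-(1:ℝ)/2)) * w ^ (-(3:ℝ)/2) = w ^ (l - 1) := by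
      rw [← Real.rpow_add hw0]
      congr 1
      rw [hl]; ring
    have e5 : Real.exp (-(1/2) * (w⁻¹ * (δ - 2 * w * γ + w^2 * ρ))) * Real.exp κ *
          Real.exp (-(1/w + κ^2 * w) / 2)
        = Real.exp (γ + κ) * Real.exp (-(((δ+1) / w + (ρ+κ^2) * w) / 2)) := by
      rw [← Real.exp_add, ← Real.exp_add, ← Real.exp_add]
      congr 1
      field_simp
      ring
    show mvnPdf d (μ + w • α) (w • S) v *
          ((1 / Real.sqrt (2 * Real.pi)) * Real.exp κ * w ^ (-(3:ℝ)/2) *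
            Real.exp (-(1/w + κ^2 * w) / 2)) = _
    rw [mvnPdf, hdet2, hinv, hquad, e1, e2]
    calc (2 * Real.pi) ^ (-(d:ℝ)/2) * (w ^ ((d:ℝ) * (-(1:ℝ)/2)) * S.det ^ (-(1:ℝ)/2)) *
          Real.exp (-(1/2) * (w⁻¹ * (δ - 2 * w * γ + w^2 * ρ))) *
          ((2 * Real.pi) ^ (-(1:ℝ)/2) * Real.exp κ * w ^ (-(3:ℝ)/2) *
            Real.exp (-(1/w + κ^2 * w) / 2))
        = ((2 * Real.pi) ^ (-(d:ℝ)/2) * (2 * Real.pi) ^ (-(1:ℝ)/2)) * S.det ^ (-(1:ℝ)/2) *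
          (w ^ ((d:ℝ) * (-(1:ℝ)/2)) * w ^ (-(3:ℝ)/2)) *
          (Real.exp (-(1/2) * (w⁻¹ * (δ - 2 * w * γ + w^2 * ρ))) * Real.exp κ *
            Real.exp (-(1/w + κ^2 * w) / 2)) := by ring
      _ = _ := by rw [e3, e4, e5]; ring
  rw [MeasureTheory.setIntegral_congr_fun measurableSet_Ioi key,
    MeasureTheory.integral_const_mul,
    integral_besselK_form l (δ+1) (ρ+κ^2) ha hb]
  have c1 : (2 * Real.pi) ^ (-((d:ℝ)+1)/2) = ((2 * Real.pi) ^ (((d:ℝ)+1)/2))⁻¹ := by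
    rw [← Real.rpow_neg (by positivity)]
    congr 1
    ring
  have c2 : S.det ^ (-(1:ℝ)/2) = (Real.sqrt S.det)⁻¹ := by
    rw [Real.sqrt_eq_rpow, ← Real.rpow_neg hdet.le]
    norm_num
  have c3 : l / 2 = -(1 + (d:ℝ))/4 := by rw [hl]; ring
  have c4 : Real.sqrt ((δ+1) * (ρ+κ^2)) = Real.sqrt ((ρ+κ^2) * (δ+1)) := by
    rw [mul_comm]
  rw [c1, c2, c3, c4]
  have h2pi : (0:ℝ) < (2 * Real.pi) ^ (((d:ℝ)+1)/2) := by positivity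
  have hsd : (0:ℝ) < Real.sqrt S.det := Real.sqrt_pos.mpr hdet
  field_simp
end

section
/- Closed-form joint maximizer for location and skewness: fix positive weights t_i, w_i, u_i (i = 1,…,n) with u_i interpreted as weights for 1/W, set n₀ = Σ t_i, A = Σ t_i u_i, B = Σ t_i w_i and assume A·B − n₀² ≠ 0. Then for any positive definite Σ, the function (μ,α) ↦ −(1/2)Σ_i t_i [u_i (c_i − μ)ᵀΣ^{-1}(c_i − μ) + w_i αᵀΣ^{-1}α − (c_i − μ)ᵀΣ^{-1}α − αᵀΣ^{-1}(c_i − μ)] has a unique stationary point given by μ = [Σ_i t_i c_i (u_i·(B/n₀) − 1)] / ((B/n₀)·A − n₀) and α = [Σ_i t_i c_i ((A/n₀) − u_i)] / ((B/n₀)·A − n₀). -/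
open Matrix



section aux
variable {d : ℕ}

lemma quad_hasFDerivAt {E : Type*} [NormedAddCommGroup E] [NormedSpace ℝ E]
    (f : E → ℝ) (L : E →L[ℝ] ℝ) (Q : E →L[ℝ] E →L[ℝ] ℝ) (p : E)
    (h : ∀ q, f (p + q) = f p + L q + Q q q) : HasFDerivAt f L p := by
  have hQ : HasFDerivAt (fun q : E => Q q q) (0 : E →L[ℝ] ℝ) 0 := by
    have hb : HasFDerivAt (fun x : E × E => Q x.1 x.2)
        (Q.isBoundedBilinearMap.deriv ((0 : E), (0 : E))) ((0 : E), (0 : E)) :=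
      Q.isBoundedBilinearMap.hasFDerivAt _
    have hdiag : HasFDerivAt (fun q : E => (q, q))
        ((ContinuousLinearMap.id ℝ E).prod (ContinuousLinearMap.id ℝ E)) 0 :=
      (hasFDerivAt_id (0 : E)).prodMk (hasFDerivAt_id (0 : E))
    have hcomp := HasFDerivAt.comp (f := fun q : E => (q, q)) (0 : E) hb hdiag
    refine HasFDerivAt.congr_fderiv hcomp ?_
    ext q
    simp [IsBoundedBilinearMap.deriv]
  have hg : HasFDerivAt (fun q : E => f (p + q)) L 0 := by
    have h1 : HasFDerivAt (fun q : E => f p + L q + Q q q)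
        (((0 : E →L[ℝ] ℝ) + L) + 0) 0 :=
      (((hasFDerivAt_const (f p) 0)).add L.hasFDerivAt).add hQ
    have h2 : (fun q : E => f (p + q)) = fun q : E => f p + L q + Q q q := by
      funext q; exact h q
    rw [h2]
    simpa using h1
  have hfe : f = (fun q : E => f (p + q)) ∘ (fun x : E => x - p) := by
    funext x; simp
  rw [hfe]
  have hsub : HasFDerivAt (fun x : E => x - p) (ContinuousLinearMap.id ℝ E) p := by
    simpa using (hasFDerivAt_id p).sub_const p
  rw [show (0 : E) = p - p by simp] at hg
  have := HasFDerivAt.comp (f := fun x : E => x - p) p hg hsub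
  simpa using this

lemma dmv_sum {ι : Type*} (s : Finset ι) (x : Fin d → ℝ) (M : Matrix (Fin d) (Fin d) ℝ)
    (g : ι → Fin d → ℝ) :
    x ⬝ᵥ M *ᵥ (∑ i ∈ s, g i) = ∑ i ∈ s, x ⬝ᵥ M *ᵥ (g i) := by
  let φ : (Fin d → ℝ) →ₗ[ℝ] ℝ :=
    { toFun := fun v => x ⬝ᵥ M *ᵥ v
      map_add' := fun a b => by simp [Matrix.mulVec_add, dotProduct_add]
      map_smul' := fun c a => by simp [Matrix.mulVec_smul, dotProduct_smul] }
  exact map_sum φ g s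

noncomputable def pairCLM (v w : Fin d → ℝ) : ((Fin d → ℝ) × (Fin d → ℝ)) →L[ℝ] ℝ :=
  LinearMap.toContinuousLinearMap
    { toFun := fun q => q.1 ⬝ᵥ v + q.2 ⬝ᵥ w
      map_add' := fun a b => by
        simp [add_dotProduct]; ring
      map_smul' := fun c a => by
        simp [smul_dotProduct, smul_eq_mul]; ring }

@[simp] lemma pairCLM_apply (v w : Fin d → ℝ) (q : (Fin d → ℝ) × (Fin d → ℝ)) :
    pairCLM v w q = q.1 ⬝ᵥ v + q.2 ⬝ᵥ w := rfl

noncomputable def quadCLM {n : ℕ} (t u w : Fin n → ℝ) (M : Matrix (Fin d) (Fin d) ℝ) :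
    ((Fin d → ℝ) × (Fin d → ℝ)) →L[ℝ] ((Fin d → ℝ) × (Fin d → ℝ)) →L[ℝ] ℝ :=
  LinearMap.toContinuousLinearMap <|
    (LinearMap.toContinuousLinearMap :
        (((Fin d → ℝ) × (Fin d → ℝ)) →ₗ[ℝ] ℝ) ≃ₗ[ℝ] _).toLinearMap ∘ₗ
      LinearMap.mk₂ ℝ
        (fun q q' : (Fin d → ℝ) × (Fin d → ℝ) => ∑ i, t i * (-(1/2)) *
          (u i * (q.1 ⬝ᵥ M *ᵥ q'.1) + w i * (q.2 ⬝ᵥ M *ᵥ q'.2) +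
            q.1 ⬝ᵥ M *ᵥ q'.2 + q.2 ⬝ᵥ M *ᵥ q'.1))
        (fun a b q' => by
          rw [← Finset.sum_add_distrib]
          refine Finset.sum_congr rfl fun i _ => ?_
          simp [add_dotProduct, Prod.fst_add, Prod.snd_add]; ring)
        (fun c a q' => by
          rw [Finset.smul_sum]
          refine Finset.sum_congr rfl fun i _ => ?_
          simp [smul_dotProduct, Prod.smul_fst, Prod.smul_snd, smul_eq_mul]; ring)
        (fun a b1 b2 => by
          rw [← Finset.sum_add_distrib]
          refine Finset.sum_congr rfl fun i _ => ?_
          simp [dotProduct_add, Matrix.mulVec_add, Prod.fst_add, Prod.snd_add]; ring)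
        (fun c a b => by
          rw [Finset.smul_sum]
          refine Finset.sum_congr rfl fun i _ => ?_
          simp [dotProduct_smul, Matrix.mulVec_smul, Prod.smul_fst, Prod.smul_snd,
            smul_eq_mul]; ring)

@[simp] lemma quadCLM_apply {n : ℕ} (t u w : Fin n → ℝ) (M : Matrix (Fin d) (Fin d) ℝ)
    (q q' : (Fin d → ℝ) × (Fin d → ℝ)) :
    quadCLM t u w M q q' = ∑ i, t i * (-(1/2)) *
      (u i * (q.1 ⬝ᵥ M *ᵥ q'.1) + w i * (q.2 ⬝ᵥ M *ᵥ q'.2) +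
        q.1 ⬝ᵥ M *ᵥ q'.2 + q.2 ⬝ᵥ M *ᵥ q'.1) := rfl

lemma sym_dmv {M : Matrix (Fin d) (Fin d) ℝ} (hM : Mᵀ = M) (x y : Fin d → ℝ) :
    x ⬝ᵥ M *ᵥ y = y ⬝ᵥ M *ᵥ x := by
  rw [Matrix.dotProduct_mulVec, ← Matrix.vecMul_transpose, hM, dotProduct_comm]

end aux


/-- Closed-form joint maximizer (unique stationary point) for location and skewness in
the M-step of the EM algorithm. -/
theorem location_skewness_stationary_point {d n : ℕ}
    (t u w : Fin n → ℝ) (ht : ∀ i, 0 < t i) (hu : ∀ i, 0 < u i) (hw : ∀ i, 0 < w i)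
    (c : Fin n → Fin d → ℝ) (S : Matrix (Fin d) (Fin d) ℝ) (hS : S.PosDef)
    (n0 A B : ℝ) (hn0 : n0 = ∑ i, t i) (hA : A = ∑ i, t i * u i) (hB : B = ∑ i, t i * w i)
    (hdet : A * B - n0 ^ 2 ≠ 0)
    (f : (Fin d → ℝ) × (Fin d → ℝ) → ℝ)
    (hf : f = fun p => -(1/2) * ∑ i, t i *
      (u i * ((c i - p.1) ⬝ᵥ (S⁻¹ *ᵥ (c i - p.1))) +
        w i * (p.2 ⬝ᵥ (S⁻¹ *ᵥ p.2)) -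
        ((c i - p.1) ⬝ᵥ (S⁻¹ *ᵥ p.2)) -
        (p.2 ⬝ᵥ (S⁻¹ *ᵥ (c i - p.1)))))
    (μs αs : Fin d → ℝ)
    (hμ : μs = ((B/n0) * A - n0)⁻¹ • ∑ i, (t i * (u i * (B/n0) - 1)) • c i)
    (hα : αs = ((B/n0) * A - n0)⁻¹ • ∑ i, (t i * (A/n0 - u i)) • c i) :
    HasFDerivAt f (0 : ((Fin d → ℝ) × (Fin d → ℝ)) →L[ℝ] ℝ) (μs, αs) ∧
      ∀ p : (Fin d → ℝ) × (Fin d → ℝ),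
        HasFDerivAt f (0 : ((Fin d → ℝ) × (Fin d → ℝ)) →L[ℝ] ℝ) p → p = (μs, αs) := by
  classical
  have hd0 : A * B - n0 * n0 ≠ 0 := by rwa [← pow_two]
  -- n0 is nonzero
  have hn0pos : 0 < n0 := by
    rcases Nat.eq_zero_or_pos n with hn | hn
    · exfalso
      apply hdet
      subst hn
      rw [hA, hB, hn0]
      simp
    · have : Nonempty (Fin n) := ⟨⟨0, hn⟩⟩
      rw [hn0]
      exact Finset.sum_pos (fun i _ => ht i) Finset.univ_nonempty
  have hn0ne : n0 ≠ 0 := ne_of_gt hn0pos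
  set M := S⁻¹ with hMdef
  have hMpd : M.PosDef := hS.inv
  have hMsym : Mᵀ = M := by
    have h : M.IsSymm := by simpa using hMpd.1
    exact h
  set su : Fin d → ℝ := ∑ i, (t i * u i) • c i with hsu
  set sv : Fin d → ℝ := ∑ i, (t i) • c i with hsv
  -- the linear part of f at p, in summed form
  have hLsum : ∀ p q : (Fin d → ℝ) × (Fin d → ℝ),
      q.1 ⬝ᵥ M *ᵥ (su - A • p.1 - n0 • p.2) + q.2 ⬝ᵥ M *ᵥ (sv - n0 • p.1 - B • p.2)
        = ∑ i, t i * (u i * (q.1 ⬝ᵥ M *ᵥ (c i - p.1)) - q.1 ⬝ᵥ M *ᵥ p.2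
            + q.2 ⬝ᵥ M *ᵥ (c i - p.1) - w i * (q.2 ⬝ᵥ M *ᵥ p.2)) := by
    intro p q
    rw [hsu, hsv, hA, hB, hn0]
    simp only [Matrix.mulVec_sub, dotProduct_sub, Matrix.mulVec_smul, dotProduct_smul,
      smul_eq_mul, dmv_sum]
    simp only [Matrix.mulVec_smul, dotProduct_smul, smul_eq_mul, Finset.sum_mul]
    rw [← Finset.sum_sub_distrib, ← Finset.sum_sub_distrib, ← Finset.sum_sub_distrib,
      ← Finset.sum_sub_distrib, ← Finset.sum_add_distrib]
    refine Finset.sum_congr rfl fun i _ => ?_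
    ring
  -- derivative of f at any point
  have hD : ∀ p : (Fin d → ℝ) × (Fin d → ℝ),
      HasFDerivAt f (pairCLM (M *ᵥ (su - A • p.1 - n0 • p.2))
        (M *ᵥ (sv - n0 • p.1 - B • p.2))) p := by
    intro p
    apply quad_hasFDerivAt f _ (quadCLM t u w M) p
    intro q
    rw [hf]
    simp only [pairCLM_apply, quadCLM_apply]
    rw [hLsum p q]
    rw [Finset.mul_sum, Finset.mul_sum, ← Finset.sum_add_distrib, ← Finset.sum_add_distrib]
    refine Finset.sum_congr rfl fun i _ => ?_
    have e1 : (p + q).1 = p.1 + q.1 := rfl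
    have e2 : (p + q).2 = p.2 + q.2 := rfl
    rw [e1, e2, sub_add_eq_sub_sub]
    generalize c i - p.1 = a
    simp only [Matrix.mulVec_sub, Matrix.mulVec_add, dotProduct_sub, dotProduct_add,
      sub_dotProduct, add_dotProduct]
    rw [sym_dmv hMsym a q.1, sym_dmv hMsym a q.2, sym_dmv hMsym p.2 q.1,
      sym_dmv hMsym p.2 q.2, sym_dmv hMsym q.2 q.1, sym_dmv hMsym p.2 a]
    ring
  -- the scalar determinant
  have hk0 : (B / n0) * A - n0 ≠ 0 := by
    intro h
    apply hd0
    have hkey : ((B / n0) * A - n0) * n0 = A * B - n0 * n0 := by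
      field_simp
    rw [h, zero_mul] at hkey
    linarith
  -- the closed forms satisfy the linear system
  have E1 : A • μs + n0 • αs = su := by
    rw [hμ, hα, smul_smul, smul_smul, Finset.smul_sum, Finset.smul_sum,
      ← Finset.sum_add_distrib, hsu]
    refine Finset.sum_congr rfl fun i _ => ?_
    rw [smul_smul, smul_smul, ← add_smul]
    congr 1
    have hkinv := inv_mul_cancel₀ hk0
    have hninv := inv_mul_cancel₀ hn0ne
    linear_combination (t i * u i) * hkinv + ((B/n0*A - n0)⁻¹ * t i * A) * hninv
  have E2 : n0 • μs + B • αs = sv := by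
    rw [hμ, hα, smul_smul, smul_smul, Finset.smul_sum, Finset.smul_sum,
      ← Finset.sum_add_distrib, hsv]
    refine Finset.sum_congr rfl fun i _ => ?_
    rw [smul_smul, smul_smul, ← add_smul]
    congr 1
    have hkinv := inv_mul_cancel₀ hk0
    have hninv := inv_mul_cancel₀ hn0ne
    linear_combination t i * hkinv + ((B/n0*A - n0)⁻¹ * t i * u i * B) * hninv
  -- stationary points satisfy the linear system
  have hstat : ∀ p : (Fin d → ℝ) × (Fin d → ℝ),
      HasFDerivAt f (0 : ((Fin d → ℝ) × (Fin d → ℝ)) →L[ℝ] ℝ) p →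
        A • p.1 + n0 • p.2 = su ∧ n0 • p.1 + B • p.2 = sv := by
    intro p hp
    have h0 := hp.unique (hD p)
    have hz1 : M *ᵥ (su - A • p.1 - n0 • p.2) = 0 := by
      funext j
      have hj := congrArg (fun L : ((Fin d → ℝ) × (Fin d → ℝ)) →L[ℝ] ℝ =>
        L (Pi.single j 1, (0 : Fin d → ℝ))) h0
      simpa [single_dotProduct] using hj.symm
    have hz2 : M *ᵥ (sv - n0 • p.1 - B • p.2) = 0 := by
      funext j
      have hj := congrArg (fun L : ((Fin d → ℝ) × (Fin d → ℝ)) →L[ℝ] ℝ =>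
        L ((0 : Fin d → ℝ), Pi.single j 1)) h0
      simpa [single_dotProduct] using hj.symm
    have he1 : su - A • p.1 - n0 • p.2 = 0 := by
      by_contra hx
      have := hMpd.dotProduct_mulVec_pos hx
      simp [hz1] at this
    have he2 : sv - n0 • p.1 - B • p.2 = 0 := by
      by_contra hx
      have := hMpd.dotProduct_mulVec_pos hx
      simp [hz2] at this
    rw [sub_sub, sub_eq_zero] at he1 he2
    exact ⟨he1.symm, he2.symm⟩
  constructor
  · -- existence
    have h := hD (μs, αs)
    have hz1 : su - A • μs - n0 • αs = 0 := by rw [sub_sub, E1, sub_self]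
    have hz2 : sv - n0 • μs - B • αs = 0 := by rw [sub_sub, E2, sub_self]
    simp only at h
    rw [hz1, hz2, Matrix.mulVec_zero] at h
    have hzero : pairCLM (0 : Fin d → ℝ) (0 : Fin d → ℝ)
        = (0 : ((Fin d → ℝ) × (Fin d → ℝ)) →L[ℝ] ℝ) :=
      ContinuousLinearMap.ext fun q => by simp
    rwa [hzero] at h
  · -- uniqueness
    intro p hp
    obtain ⟨h1, h2⟩ := hstat p hp
    have d1 : A • (p.1 - μs) + n0 • (p.2 - αs) = 0 := by
      rw [smul_sub, smul_sub, sub_add_sub_comm, h1, E1, sub_self]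
    have d2 : n0 • (p.1 - μs) + B • (p.2 - αs) = 0 := by
      rw [smul_sub, smul_sub, sub_add_sub_comm, h2, E2, sub_self]
    have dx : (A * B - n0 * n0) • (p.1 - μs)
        = B • (A • (p.1 - μs) + n0 • (p.2 - αs)) - n0 • (n0 • (p.1 - μs) + B • (p.2 - αs)) := by
      module
    have dy : (A * B - n0 * n0) • (p.2 - αs)
        = A • (n0 • (p.1 - μs) + B • (p.2 - αs)) - n0 • (A • (p.1 - μs) + n0 • (p.2 - αs)) := by
      module
    rw [d1, d2, smul_zero, smul_zero, sub_zero] at dx dy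
    have hx : p.1 - μs = 0 := by
      rcases smul_eq_zero.mp dx with h | h
      · exact absurd h hd0
      · exact h
    have hy : p.2 - αs = 0 := by
      rcases smul_eq_zero.mp dy with h | h
      · exact absurd h hd0
      · exact h
    have hp1 : p.1 = μs := by rwa [sub_eq_zero] at hx
    have hp2 : p.2 = αs := by rwa [sub_eq_zero] at hy
    rw [← hp1, ← hp2]
end
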